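/- The modified operators grad~ = grad − g∘div∘(𝒩+𝒞−1)^{-1} and div~ = div − (𝒩+𝒞−1)^{-1}∘grad∘tr commute with the depth operator κ = (𝒩−𝒞−1)/2; equivalently, 𝒩∘div~ = div~∘(𝒩−1), 𝒩∘grad~ = grad~∘(𝒩+1), 𝒞∘div~ = div~∘(𝒞−1), and 𝒞∘grad~ = grad~∘(𝒞+1), as operators on polynomial symmetric tensor fields on flat ℝⁿ. -/

import Mathlib

open MvPolynomial Finset

/-- Polynomial symmetric tensor fields on flat `ℝⁿ`: polynomials in `x` (Sum.inl)
and auxiliary `y` (Sum.inr) variables. -/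
abbrev STF (n : ℕ) := MvPolynomial (Fin n ⊕ Fin n) ℝ

/-- `grad = Σ_μ y_μ ∂/∂x^μ`. -/
noncomputable def oGrad (n : ℕ) : Module.End ℝ (STF n) :=
  ∑ μ : Fin n, (LinearMap.mulLeft ℝ (X (Sum.inr μ))) ∘ₗ (pderiv (Sum.inl μ)).toLinearMap

/-- `div = Σ_μ (∂/∂y_μ)(∂/∂x^μ)`. -/
noncomputable def oDiv (n : ℕ) : Module.End ℝ (STF n) :=
  ∑ μ : Fin n, (pderiv (Sum.inr μ)).toLinearMap ∘ₗ (pderiv (Sum.inl μ)).toLinearMap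

/-- `□ = Σ_μ ∂²/∂(x^μ)²`. -/
noncomputable def oBox (n : ℕ) : Module.End ℝ (STF n) :=
  ∑ μ : Fin n, (pderiv (Sum.inl μ)).toLinearMap ∘ₗ (pderiv (Sum.inl μ)).toLinearMap

/-- Fiberwise Euler operator `N = Σ_μ y_μ ∂/∂y_μ`. -/
noncomputable def oNy (n : ℕ) : Module.End ℝ (STF n) :=
  ∑ μ : Fin n, (LinearMap.mulLeft ℝ (X (Sum.inr μ))) ∘ₗ (pderiv (Sum.inr μ)).toLinearMap

/-- Fiberwise multiplication `g = (Σ_μ y_μ²)·`. -/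
noncomputable def oGy (n : ℕ) : Module.End ℝ (STF n) :=
  LinearMap.mulLeft ℝ (∑ μ : Fin n, X (Sum.inr μ) ^ 2)

/-- Fiberwise trace `tr = Σ_μ ∂²/∂y_μ²`. -/
noncomputable def oTry (n : ℕ) : Module.End ℝ (STF n) :=
  ∑ μ : Fin n, (pderiv (Sum.inr μ)).toLinearMap ∘ₗ (pderiv (Sum.inr μ)).toLinearMap

section Part1
variable {n : ℕ}

lemma pderiv_pderiv_comm {σ : Type*} {R : Type*} [CommSemiring R] (i j : σ) (p : MvPolynomial σ R) :
    pderiv i (pderiv j p) = pderiv j (pderiv i p) := by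
  classical
  induction p using MvPolynomial.induction_on with
  | C a => simp [pderiv_C]
  | add p q hp hq => simp [hp, hq]
  | mul_X p k hp =>
    rcases eq_or_ne k j with rfl | hkj <;> rcases eq_or_ne k i with rfl | hki <;>
      simp [pderiv_mul, hp, pderiv_X_self, pderiv_X_of_ne, *] <;> ring

lemma oGrad_apply (p : STF n) :
    oGrad n p = ∑ μ : Fin n, X (Sum.inr μ) * pderiv (Sum.inl μ) p := by simp [oGrad]
lemma oNy_apply (p : STF n) :
    oNy n p = ∑ μ : Fin n, X (Sum.inr μ) * pderiv (Sum.inr μ) p := by simp [oNy]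
lemma oDiv_apply (p : STF n) :
    oDiv n p = ∑ μ : Fin n, pderiv (Sum.inr μ) (pderiv (Sum.inl μ) p) := by simp [oDiv]
lemma oTry_apply (p : STF n) :
    oTry n p = ∑ μ : Fin n, pderiv (Sum.inr μ) (pderiv (Sum.inr μ) p) := by simp [oTry]
lemma oGy_apply (p : STF n) :
    oGy n p = ∑ μ : Fin n, X (Sum.inr μ) ^ 2 * p := by simp [oGy, Finset.sum_mul]

lemma dyX (μ ν : Fin n) (p : STF n) :
    pderiv (Sum.inr μ) (X (Sum.inr ν) * p)
      = (if μ = ν then p else 0) + X (Sum.inr ν) * pderiv (Sum.inr μ) p := by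
  classical
  rcases eq_or_ne μ ν with rfl | h
  · simp [pderiv_mul]; ring
  · simp [pderiv_mul, h,
      pderiv_X_of_ne (by simpa using h.symm : Sum.inr ν ≠ (Sum.inr μ : Fin n ⊕ Fin n))]
lemma dxX (μ ν : Fin n) (p : STF n) :
    pderiv (Sum.inl μ) (X (Sum.inr ν) * p) = X (Sum.inr ν) * pderiv (Sum.inl μ) p := by
  simp [pderiv_mul, pderiv_X_of_ne (by simp : (Sum.inr ν : Fin n ⊕ Fin n) ≠ Sum.inl μ)]
lemma dyX2 (μ ν : Fin n) (p : STF n) :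
    pderiv (Sum.inr μ) (X (Sum.inr ν) ^ 2 * p)
      = (if μ = ν then 2 * (X (Sum.inr ν) * p) else 0)
        + X (Sum.inr ν) ^ 2 * pderiv (Sum.inr μ) p := by
  classical
  rcases eq_or_ne μ ν with rfl | h
  · simp [pderiv_mul, pderiv_pow]; ring
  · simp [pderiv_mul, h, pderiv_pow,
      pderiv_X_of_ne (by simpa using h.symm : Sum.inr ν ≠ (Sum.inr μ : Fin n ⊕ Fin n))]
lemma dxX2 (μ ν : Fin n) (p : STF n) :
    pderiv (Sum.inl μ) (X (Sum.inr ν) ^ 2 * p) = X (Sum.inr ν) ^ 2 * pderiv (Sum.inl μ) p := by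
  simp [pderiv_mul, pderiv_pow,
    pderiv_X_of_ne (by simp : (Sum.inr ν : Fin n ⊕ Fin n) ≠ Sum.inl μ)]

-- single-derivative commutators
lemma dy_oNy (μ : Fin n) (p : STF n) :
    pderiv (Sum.inr μ) (oNy n p) = pderiv (Sum.inr μ) p + oNy n (pderiv (Sum.inr μ) p) := by
  classical
  simp only [oNy_apply, map_sum, dyX, Finset.sum_add_distrib, Finset.sum_ite_eq,
    Finset.mem_univ, if_true]
  rw [add_right_inj]
  exact Finset.sum_congr rfl fun ν _ => by rw [pderiv_pderiv_comm]
lemma dx_oNy (μ : Fin n) (p : STF n) :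
    pderiv (Sum.inl μ) (oNy n p) = oNy n (pderiv (Sum.inl μ) p) := by
  classical
  simp only [oNy_apply, map_sum, dxX]
  exact Finset.sum_congr rfl fun ν _ => by rw [pderiv_pderiv_comm]
lemma dy_oGy (μ : Fin n) (p : STF n) :
    pderiv (Sum.inr μ) (oGy n p) = 2 * (X (Sum.inr μ) * p) + oGy n (pderiv (Sum.inr μ) p) := by
  classical
  simp only [oGy_apply, map_sum, dyX2, Finset.sum_add_distrib, Finset.sum_ite_eq,
    Finset.mem_univ, if_true]
lemma dx_oGy (μ : Fin n) (p : STF n) :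
    pderiv (Sum.inl μ) (oGy n p) = oGy n (pderiv (Sum.inl μ) p) := by
  classical
  simp only [oGy_apply, map_sum, dxX2]
lemma dy_oGrad (μ : Fin n) (p : STF n) :
    pderiv (Sum.inr μ) (oGrad n p) = pderiv (Sum.inl μ) p + oGrad n (pderiv (Sum.inr μ) p) := by
  classical
  simp only [oGrad_apply, map_sum, dyX, Finset.sum_add_distrib, Finset.sum_ite_eq,
    Finset.mem_univ, if_true]
  rw [add_right_inj]
  exact Finset.sum_congr rfl fun ν _ => by rw [pderiv_pderiv_comm]

-- operator commutators (pointwise)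
lemma oNy_oGrad (p : STF n) : oNy n (oGrad n p) = oGrad n (oNy n p) + oGrad n p := by
  classical
  simp only [oNy_apply, oGrad_apply, map_sum, dyX, dxX, mul_add, Finset.mul_sum,
    Finset.sum_add_distrib, mul_ite, mul_zero, Finset.sum_ite_eq, Finset.sum_ite_eq',
    Finset.mem_univ, if_true]
  rw [add_comm]
  rw [add_left_inj]
  rw [Finset.sum_comm]
  exact Finset.sum_congr rfl fun μ _ => Finset.sum_congr rfl fun ν _ => by
    rw [pderiv_pderiv_comm]; ring

lemma oDiv_oNy (p : STF n) : oDiv n (oNy n p) = oNy n (oDiv n p) + oDiv n p := by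
  classical
  simp only [oNy_apply, oDiv_apply, map_sum, dyX, dxX, mul_add, Finset.mul_sum,
    Finset.sum_add_distrib, mul_ite, mul_zero, map_add, Finset.sum_ite_eq, Finset.sum_ite_eq',
    Finset.mem_univ, if_true]
  rw [add_comm]
  refine congrArg₂ (fun a b : STF n => a + b) ?_ ?_
  · rw [Finset.sum_comm]
    refine Finset.sum_congr rfl fun a _ => Finset.sum_congr rfl fun b _ => ?_
    rw [pderiv_pderiv_comm (Sum.inl a) (Sum.inr b) p,
      pderiv_pderiv_comm (Sum.inr a) (Sum.inr b)]
  · exact Finset.sum_congr rfl fun a _ => by rw [pderiv_pderiv_comm]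


lemma rsmul_mul (c : ℝ) (x : STF n) : c • x = C c * x := smul_eq_C_mul x c

lemma two_rsmul (x : STF n) : (2:ℝ) • x = 2 * x := by simp [smul_eq_C_mul, map_ofNat]
lemma four_rsmul (x : STF n) : (4:ℝ) • x = 4 * x := by simp [smul_eq_C_mul, map_ofNat]

lemma oGy_mul_left (a q : STF n) : a * oGy n q = oGy n (a * q) := by
  simp only [oGy, LinearMap.mulLeft_apply]; ring

lemma oNy_oGy (p : STF n) : oNy n (oGy n p) = oGy n (oNy n p) + (2:ℝ) • oGy n p := by
  classical
  rw [oNy_apply (oGy n p)]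
  have key : ∀ μ : Fin n, X (Sum.inr μ) * pderiv (Sum.inr μ) (oGy n p)
      = 2 * (X (Sum.inr μ) ^ 2 * p) + oGy n (X (Sum.inr μ) * pderiv (Sum.inr μ) p) := by
    intro μ
    rw [dy_oGy, mul_add, oGy_mul_left]
    have h : X (Sum.inr μ) * (2 * (X (Sum.inr μ) * p)) = 2 * (X (Sum.inr μ) ^ 2 * p) := by ring
    rw [h]
  rw [Finset.sum_congr rfl fun μ _ => key μ, Finset.sum_add_distrib, add_comm]
  congr 1
  · rw [← map_sum, ← oNy_apply]
  · rw [two_rsmul, oGy_apply, Finset.mul_sum]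

lemma oTry_oNy (p : STF n) : oTry n (oNy n p) = oNy n (oTry n p) + (2:ℝ) • oTry n p := by
  classical
  rw [oTry_apply (oNy n p)]
  have key : ∀ μ : Fin n, pderiv (Sum.inr μ) (pderiv (Sum.inr μ) (oNy n p))
      = 2 * pderiv (Sum.inr μ) (pderiv (Sum.inr μ) p)
        + oNy n (pderiv (Sum.inr μ) (pderiv (Sum.inr μ) p)) := by
    intro μ
    rw [dy_oNy, map_add, dy_oNy]; ring
  rw [Finset.sum_congr rfl fun μ _ => key μ, Finset.sum_add_distrib, add_comm]
  congr 1
  · rw [← map_sum, ← oTry_apply]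
  · rw [two_rsmul, oTry_apply, Finset.mul_sum]

lemma oTry_oGy (p : STF n) :
    oTry n (oGy n p) = oGy n (oTry n p) + (2 * (n:ℝ)) • p + (4:ℝ) • oNy n p := by
  classical
  rw [oTry_apply (oGy n p)]
  have key : ∀ μ : Fin n, pderiv (Sum.inr μ) (pderiv (Sum.inr μ) (oGy n p))
      = oGy n (pderiv (Sum.inr μ) (pderiv (Sum.inr μ) p)) + 2 * p
        + 4 * (X (Sum.inr μ) * pderiv (Sum.inr μ) p) := by
    intro μ
    have h2 : pderiv (Sum.inr μ) (2 : STF n) = 0 := by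
      rw [show (2 : STF n) = C 2 from (map_ofNat C 2).symm]; exact pderiv_C
    rw [dy_oGy, map_add, dy_oGy, pderiv_mul, pderiv_mul, h2]
    simp only [pderiv_X_self]
    ring
  rw [Finset.sum_congr rfl fun μ _ => key μ, Finset.sum_add_distrib, Finset.sum_add_distrib]
  congr 1
  · congr 1
    · rw [← map_sum, ← oTry_apply]
    · rw [rsmul_mul, Finset.sum_const, card_univ, Fintype.card_fin, nsmul_eq_mul]
      rw [map_mul, map_natCast, map_ofNat]
      ring
  · rw [four_rsmul, oNy_apply, Finset.mul_sum]

lemma oDiv_oGy (p : STF n) : oDiv n (oGy n p) = oGy n (oDiv n p) + (2:ℝ) • oGrad n p := by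
  classical
  rw [oDiv_apply (oGy n p)]
  have key : ∀ μ : Fin n, pderiv (Sum.inr μ) (pderiv (Sum.inl μ) (oGy n p))
      = oGy n (pderiv (Sum.inr μ) (pderiv (Sum.inl μ) p))
        + 2 * (X (Sum.inr μ) * pderiv (Sum.inl μ) p) := by
    intro μ
    rw [dx_oGy, dy_oGy]; ring
  rw [Finset.sum_congr rfl fun μ _ => key μ, Finset.sum_add_distrib]
  congr 1
  · rw [← map_sum, ← oDiv_apply]
  · rw [two_rsmul, oGrad_apply, Finset.mul_sum]

lemma oTry_oGrad (p : STF n) : oTry n (oGrad n p) = oGrad n (oTry n p) + (2:ℝ) • oDiv n p := by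
  classical
  rw [oTry_apply (oGrad n p)]
  have key : ∀ μ : Fin n, pderiv (Sum.inr μ) (pderiv (Sum.inr μ) (oGrad n p))
      = oGrad n (pderiv (Sum.inr μ) (pderiv (Sum.inr μ) p))
        + 2 * pderiv (Sum.inr μ) (pderiv (Sum.inl μ) p) := by
    intro μ
    rw [dy_oGrad, map_add, dy_oGrad, pderiv_pderiv_comm (Sum.inr μ) (Sum.inl μ)]
    ring
  rw [Finset.sum_congr rfl fun μ _ => key μ, Finset.sum_add_distrib]
  congr 1
  · rw [← map_sum, ← oTry_apply]
  · rw [two_rsmul, oDiv_apply, Finset.mul_sum]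

lemma oGrad_oGy (p : STF n) : oGrad n (oGy n p) = oGy n (oGrad n p) := by
  classical
  simp only [oGrad_apply, oGy_apply, map_sum, dxX2, Finset.mul_sum]
  rw [Finset.sum_comm]
  exact Finset.sum_congr rfl fun a _ => Finset.sum_congr rfl fun b _ => by ring

lemma oTry_oDiv (p : STF n) : oTry n (oDiv n p) = oDiv n (oTry n p) := by
  classical
  simp only [oTry_apply, oDiv_apply, map_sum]
  rw [Finset.sum_comm]
  refine Finset.sum_congr rfl fun a _ => Finset.sum_congr rfl fun b _ => ?_
  rw [pderiv_pderiv_comm (Sum.inr a) (Sum.inr b) (pderiv (Sum.inl b) p),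
    pderiv_pderiv_comm (Sum.inr a) (Sum.inl b) p,
    pderiv_pderiv_comm (Sum.inl b) (Sum.inr a) (pderiv (Sum.inr a) p),
    pderiv_pderiv_comm (Sum.inr b) (Sum.inr a) (pderiv (Sum.inl b) (pderiv (Sum.inr a) p))]

end Part1
section Part2
variable {n : ℕ}

/-- total y-degree of a monomial exponent -/
def yd {n : ℕ} (m : (Fin n ⊕ Fin n) →₀ ℕ) : ℕ := ∑ μ : Fin n, m (Sum.inr μ)

lemma X_mul_pd_monomial (i : Fin n ⊕ Fin n) (m : (Fin n ⊕ Fin n) →₀ ℕ) (c : ℝ) :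
    X i * pderiv i (monomial m c) = monomial m ((m i : ℝ) * c) := by
  classical
  rw [pderiv_monomial, X, monomial_mul]
  by_cases h : m i = 0
  · simp [h]
  · have hm : Finsupp.single i 1 + (m - Finsupp.single i 1) = m := by
      ext j
      rcases eq_or_ne j i with rfl | hj
      · simp only [Finsupp.add_apply, Finsupp.tsub_apply, Finsupp.single_eq_same]
        omega
      · simp [Finsupp.single_eq_of_ne hj]
    rw [hm]
    ring_nf

lemma oNy_monomial (m : (Fin n ⊕ Fin n) →₀ ℕ) (c : ℝ) :
    oNy n (monomial m c) = monomial m ((yd m : ℝ) * c) := by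
  rw [oNy_apply]
  rw [Finset.sum_congr rfl fun μ _ => X_mul_pd_monomial (Sum.inr μ) m c]
  rw [← map_sum, ← Finset.sum_mul, yd]
  push_cast
  rfl

lemma coeff_oNy (m : (Fin n ⊕ Fin n) →₀ ℕ) (p : STF n) :
    coeff m (oNy n p) = (yd m : ℝ) * coeff m p := by
  classical
  conv_lhs => rw [← support_sum_monomial_coeff p]
  rw [map_sum, coeff_sum]
  simp only [oNy_monomial, coeff_monomial]
  rw [Finset.sum_ite_eq' p.support m fun m' => (yd m' : ℝ) * coeff m' p]
  by_cases h : m ∈ p.support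
  · simp [h]
  · simp [h, notMem_support_iff.mp h]

lemma eigen_support {p : STF n} {c : ℝ} (h : oNy n p = c • p) :
    ∀ m ∈ p.support, (yd m : ℝ) = c := by
  intro m hm
  have h2 := congrArg (coeff m) h
  rw [coeff_oNy, coeff_smul, smul_eq_mul] at h2
  exact mul_right_cancel₀ (mem_support_iff.mp hm) h2

lemma support_eigen {p : STF n} {d : ℕ} (h : ∀ m ∈ p.support, yd m = d) :
    oNy n p = (d : ℝ) • p := by
  classical
  apply MvPolynomial.ext
  intro m
  rw [coeff_oNy, coeff_smul, smul_eq_mul]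
  by_cases hm : m ∈ p.support
  · rw [h m hm]
  · rw [notMem_support_iff.mp hm, mul_zero, mul_zero]

lemma eigen_neg {p : STF n} {c : ℝ} (h : oNy n p = c • p) (hc : c < 0) : p = 0 := by
  rw [← support_eq_empty, Finset.eq_empty_iff_forall_notMem]
  intro m hm
  have := eigen_support h m hm
  have h0 : (0:ℝ) ≤ (yd m : ℝ) := Nat.cast_nonneg _
  rw [this] at h0
  exact absurd hc (not_lt.mpr h0)

lemma monomial_eigen (m : (Fin n ⊕ Fin n) →₀ ℕ) (c : ℝ) :
    oNy n (monomial m c) = ((yd m : ℕ) : ℝ) • monomial m c := by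
  apply support_eigen
  intro m' hm'
  have := support_monomial_subset hm'
  simp only [Finset.mem_singleton] at this
  rw [this]

-- behaviour of powers of oGy on eigen/harmonic vectors
lemma pow_succ_apply (k : ℕ) (w : STF n) :
    (oGy n ^ (k+1)) w = (oGy n ^ k) (oGy n w) := by
  rw [pow_succ, Module.End.mul_apply]

lemma pow_succ_apply' (k : ℕ) (w : STF n) :
    (oGy n ^ (k+1)) w = oGy n ((oGy n ^ k) w) := by
  rw [pow_succ', Module.End.mul_apply]

lemma oNy_pow_oGy {s : ℝ} {φ : STF n} (hφ : oNy n φ = s • φ) (k : ℕ) :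
    oNy n ((oGy n ^ k) φ) = (s + 2*k) • (oGy n ^ k) φ := by
  induction k with
  | zero => simpa using hφ
  | succ k ih =>
    rw [pow_succ_apply', oNy_oGy, ih, map_smul, ← add_smul]
    congr 1
    push_cast
    ring

lemma oTry_pow_oGy {s : ℝ} {φ : STF n} (hφ : oNy n φ = s • φ) (hφ2 : oTry n φ = 0) (k : ℕ) :
    oTry n ((oGy n ^ k) φ)
      = (2*k*(2*s + 2*k + (n:ℝ) - 2)) • (oGy n ^ (k-1)) φ := by
  induction k with
  | zero => simpa using hφ2
  | succ k ih =>
    rw [pow_succ_apply', oTry_oGy, ih, map_smul, oNy_pow_oGy hφ]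
    rcases Nat.eq_zero_or_pos k with rfl | hk
    · have h0 : (oGy n ^ (0 + 1 - 1)) φ = φ := by norm_num
      have hz : (2 * ((0:ℕ):ℝ) * (2*s+2*((0:ℕ):ℝ)+(n:ℝ)-2)) = 0 := by norm_num
      rw [h0, hz, zero_smul, zero_add, smul_smul, ← add_smul]
      congr 1
      push_cast
      ring
    · have hk1 : k - 1 + 1 = k := Nat.succ_pred_eq_of_pos hk
      rw [show (k+1) - 1 = k from rfl, ← pow_succ_apply' (k-1), hk1,
        smul_smul, ← add_smul, ← add_smul]
      congr 1
      push_cast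
      ring

lemma oGrad_pow_oGy (φ : STF n) (k : ℕ) :
    oGrad n ((oGy n ^ k) φ) = (oGy n ^ k) (oGrad n φ) := by
  induction k with
  | zero => simp
  | succ k ih => rw [pow_succ_apply', oGrad_oGy, ih, pow_succ_apply']

lemma oDiv_pow_oGy (φ : STF n) (k : ℕ) :
    oDiv n ((oGy n ^ k) φ)
      = (oGy n ^ k) (oDiv n φ) + (2*k : ℝ) • (oGy n ^ (k-1)) (oGrad n φ) := by
  induction k with
  | zero => simp
  | succ k ih =>
    rw [pow_succ_apply', oDiv_oGy, ih, map_add, map_smul,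
      ← pow_succ_apply' k (oDiv n φ), oGrad_pow_oGy, add_assoc]
    congr 1
    rw [show (k+1) - 1 = k from rfl]
    rcases Nat.eq_zero_or_pos k with rfl | hk
    · rw [show (2*((0:ℕ):ℝ)) = 0 from by norm_num, zero_smul, zero_add]
      norm_num
    · have hk1 : k - 1 + 1 = k := Nat.succ_pred_eq_of_pos hk
      rw [← pow_succ_apply' (k-1) (oGrad n φ), hk1, ← add_smul]
      congr 1
      push_cast
      ring

end Part2
section Part3
variable {n : ℕ}

def GenD (n d : ℕ) : Set (STF n) :=
  {v | ∃ (k s : ℕ) (φ : STF n), s + 2*k = d ∧ oNy n φ = (s:ℝ) • φ ∧ oTry n φ = 0 ∧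
    v = (oGy n ^ k) φ}

def GenAll (n : ℕ) : Set (STF n) :=
  {v | ∃ (k s : ℕ) (φ : STF n), oNy n φ = (s:ℝ) • φ ∧ oTry n φ = 0 ∧ v = (oGy n ^ k) φ}

lemma eigen_SD {d : ℕ} {v : STF n} (hv : v ∈ Submodule.span ℝ (GenD n d)) :
    oNy n v = (d:ℝ) • v := by
  have hle : Submodule.span ℝ (GenD n d) ≤ LinearMap.ker (oNy n - (d:ℝ) • (1 : Module.End ℝ (STF n))) := by
    rw [Submodule.span_le]
    rintro v ⟨k, s, φ, hks, hφ, -, rfl⟩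
    simp only [SetLike.mem_coe, LinearMap.mem_ker, LinearMap.sub_apply, LinearMap.smul_apply,
      Module.End.one_apply]
    rw [oNy_pow_oGy hφ, sub_eq_zero]
    congr 1
    rw [← hks]
    push_cast
    ring
  have := hle hv
  rw [LinearMap.mem_ker, LinearMap.sub_apply, LinearMap.smul_apply, Module.End.one_apply,
    sub_eq_zero] at this
  exact this

lemma SD_le_map (hn : 1 ≤ n) (d : ℕ) :
    Submodule.span ℝ (GenD n d) ≤
      Submodule.map ((oTry n) * (oGy n)) (Submodule.span ℝ (GenD n d)) := by
  rw [Submodule.span_le]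
  rintro v ⟨k, s, φ, hks, hφ, hφ2, rfl⟩
  set c : ℝ := 2*((k:ℝ)+1)*(2*(s:ℝ) + 2*((k:ℝ)+1) + (n:ℝ) - 2) with hc
  have hcpos : 0 < c := by
    have h1 : (1:ℝ) ≤ (n:ℝ) := by exact_mod_cast hn
    have h2 : (0:ℝ) ≤ (s:ℝ) := Nat.cast_nonneg _
    have h3 : (0:ℝ) ≤ (k:ℝ) := Nat.cast_nonneg _
    nlinarith
  have hkey : ((oTry n) * (oGy n)) (c⁻¹ • (oGy n ^ k) φ) = (oGy n ^ k) φ := by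
    rw [Module.End.mul_apply, map_smul, map_smul, ← pow_succ_apply' k φ,
      oTry_pow_oGy hφ hφ2 (k+1)]
    have : (k + 1 - 1) = k := rfl
    rw [this, smul_smul]
    have : c⁻¹ * (2*((k+1:ℕ):ℝ)*(2*(s:ℝ) + 2*((k+1:ℕ):ℝ) + (n:ℝ) - 2)) = 1 := by
      rw [hc]
      push_cast
      field_simp
      exact div_self (ne_of_gt (by linarith [(by exact_mod_cast hn : (1:ℝ) ≤ (n:ℝ)), (Nat.cast_nonneg s : (0:ℝ) ≤ s), (Nat.cast_nonneg k : (0:ℝ) ≤ k)]))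
    rw [this, one_smul]
  exact ⟨c⁻¹ • (oGy n ^ k) φ,
    Submodule.smul_mem _ _ (Submodule.subset_span ⟨k, s, φ, hks, hφ, hφ2, rfl⟩), hkey⟩

lemma map_oGy_SD {d : ℕ} {v : STF n} (hv : v ∈ Submodule.span ℝ (GenD n d)) :
    oGy n v ∈ Submodule.span ℝ (GenD n (d+2)) := by
  have : Submodule.map (oGy n) (Submodule.span ℝ (GenD n d)) ≤
      Submodule.span ℝ (GenD n (d+2)) := by
    rw [Submodule.map_span, Submodule.span_le]
    rintro w ⟨v', ⟨k, s, φ, hks, hφ, hφ2, rfl⟩, rfl⟩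
    exact Submodule.subset_span ⟨k+1, s, φ, by omega, hφ, hφ2, (pow_succ_apply' k φ).symm⟩
  exact this ⟨v, hv, rfl⟩

lemma mem_SD (hn : 1 ≤ n) : ∀ d : ℕ, ∀ p : STF n, oNy n p = (d:ℝ) • p →
    p ∈ Submodule.span ℝ (GenD n d) := by
  intro d
  induction d using Nat.strong_induction_on with
  | _ d IH =>
    intro p hp
    have hq : oNy n (oTry n p) = ((d:ℝ) - 2) • oTry n p := by
      have h1 := oTry_oNy p
      rw [hp, map_smul] at h1
      have h2 : oNy n (oTry n p) = (d:ℝ) • oTry n p - (2:ℝ) • oTry n p :=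
        eq_sub_of_add_eq h1.symm
      rw [h2, ← sub_smul]
    match d with
    | 0 =>
      have hq0 : oTry n p = 0 := eigen_neg hq (by norm_num)
      exact Submodule.subset_span ⟨0, 0, p, by omega, by simpa using hp, hq0, by simp⟩
    | 1 =>
      have hq0 : oTry n p = 0 := eigen_neg hq (by norm_num)
      exact Submodule.subset_span ⟨0, 1, p, by omega, by simpa using hp, hq0, by simp⟩
    | (e+2) =>
      have hqe : oNy n (oTry n p) = (e:ℝ) • oTry n p := by
        rw [hq]; congr 1; push_cast; ring
      have hqmem := IH e (by omega) (oTry n p) hqe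
      obtain ⟨r, hr, hrq⟩ := SD_le_map hn e hqmem
      rw [Module.End.mul_apply] at hrq
      have hre : oNy n r = (e:ℝ) • r := eigen_SD hr
      have hhtr : oTry n (p - oGy n r) = 0 := by
        rw [map_sub, hrq, sub_self]
      have hhe : oNy n (p - oGy n r) = ((e+2:ℕ):ℝ) • (p - oGy n r) := by
        rw [map_sub, hp, oNy_oGy, hre, map_smul, smul_sub]
        push_cast
        module
      have hmem : p - oGy n r ∈ Submodule.span ℝ (GenD n (e+2)) :=
        Submodule.subset_span ⟨0, e+2, p - oGy n r, by omega, hhe, hhtr, by simp⟩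
      have := Submodule.add_mem _ hmem (map_oGy_SD hr)
      simpa using this

lemma genAll_span_top (hn : 1 ≤ n) : Submodule.span ℝ (GenAll n) = ⊤ := by
  rw [eq_top_iff]
  intro p _
  rw [← support_sum_monomial_coeff p]
  refine Submodule.sum_mem _ fun m _ => ?_
  have h1 : monomial m (coeff m p) ∈ Submodule.span ℝ (GenD n (yd m)) :=
    mem_SD hn (yd m) _ (monomial_eigen m (coeff m p))
  refine Submodule.span_mono ?_ h1
  rintro v ⟨k, s, φ, -, hφ, hφ2, rfl⟩
  exact ⟨k, s, φ, hφ, hφ2, rfl⟩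

end Part3
section Part4
variable {n : ℕ} {C E : Module.End ℝ (STF n)}

lemma NNCE_apply (C : Module.End ℝ (STF n)) (v : STF n) :
    (oNy n + ((n : ℝ) / 2) • 1 + C - 1) v = oNy n v + ((n:ℝ)/2) • v + C v - v := by
  simp [LinearMap.sub_apply, LinearMap.add_apply, LinearMap.smul_apply, Module.End.one_apply]

lemma E_gen
    (hC : ∀ (s k : ℕ) (φ : STF n), oNy n φ = (s : ℝ) • φ → oTry n φ = 0 →
      C ((oGy n ^ k) φ) = ((s : ℝ) + ((n : ℝ) - 2) / 2) • (oGy n ^ k) φ)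
    (hE2 : E * (oNy n + ((n : ℝ) / 2) • 1 + C - 1) = 1)
    (s k : ℕ) (φ : STF n) (hφ : oNy n φ = (s:ℝ) • φ) (hφ2 : oTry n φ = 0)
    (hne : 2*(s:ℝ) + 2*(k:ℝ) + (n:ℝ) - 2 ≠ 0) :
    E ((oGy n ^ k) φ) = (2*(s:ℝ) + 2*(k:ℝ) + (n:ℝ) - 2)⁻¹ • (oGy n ^ k) φ := by
  set v := (oGy n ^ k) φ with hv
  have hNy : oNy n v = ((s:ℝ) + 2*(k:ℝ)) • v := oNy_pow_oGy hφ k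
  have hCv : C v = ((s:ℝ) + ((n:ℝ)-2)/2) • v := hC s k φ hφ hφ2
  have hA : (oNy n + ((n : ℝ) / 2) • 1 + C - 1) v = (2*(s:ℝ)+2*(k:ℝ)+(n:ℝ)-2) • v := by
    rw [NNCE_apply, hNy, hCv]
    match_scalars
    ring
  have h3 : E ((2*(s:ℝ)+2*(k:ℝ)+(n:ℝ)-2) • v) = v := by
    rw [← hA, ← Module.End.mul_apply, hE2, Module.End.one_apply]
  rw [map_smul] at h3
  have h4 : (2*(s:ℝ)+2*(k:ℝ)+(n:ℝ)-2)⁻¹ • ((2*(s:ℝ)+2*(k:ℝ)+(n:ℝ)-2) • E v)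
      = (2*(s:ℝ)+2*(k:ℝ)+(n:ℝ)-2)⁻¹ • v := by rw [h3]
  rwa [smul_smul, inv_mul_cancel₀ hne, one_smul] at h4

lemma oNy_one : oNy n (1 : STF n) = 0 := by
  rw [oNy_apply]
  simp [pderiv_one]

lemma oTry_one : oTry n (1 : STF n) = 0 := by
  rw [oTry_apply]
  simp [pderiv_one]

lemma n_ne_two
    (hC : ∀ (s k : ℕ) (φ : STF n), oNy n φ = (s : ℝ) • φ → oTry n φ = 0 →
      C ((oGy n ^ k) φ) = ((s : ℝ) + ((n : ℝ) - 2) / 2) • (oGy n ^ k) φ)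
    (hE2 : E * (oNy n + ((n : ℝ) / 2) • 1 + C - 1) = 1) :
    n ≠ 2 := by
  intro h2
  have hone : oNy n (1 : STF n) = ((0:ℕ):ℝ) • 1 := by rw [oNy_one]; simp
  have hC1 : C ((oGy n ^ 0) (1 : STF n))
      = (((0:ℕ):ℝ) + ((n:ℝ)-2)/2) • (oGy n ^ 0) (1 : STF n) := hC 0 0 1 hone oTry_one
  simp only [pow_zero, Module.End.one_apply, Nat.cast_zero, zero_add] at hC1
  have hA1 : (oNy n + ((n : ℝ) / 2) • 1 + C - 1) (1 : STF n) = 0 := by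
    rw [NNCE_apply, oNy_one, hC1, h2]
    norm_num
  have : (1 : STF n) = 0 := by
    have h3 : (E * (oNy n + ((n : ℝ) / 2) • 1 + C - 1)) (1 : STF n) = (1 : STF n) := by
      rw [hE2, Module.End.one_apply]
    rw [Module.End.mul_apply, hA1, map_zero] at h3
    exact h3.symm
  exact one_ne_zero this

end Part4
section Part5
variable {n : ℕ} {C E : Module.End ℝ (STF n)}

set_option maxHeartbeats 2000000 in
lemma key_gen (hn3 : 3 ≤ n)
    (hC : ∀ (s k : ℕ) (φ : STF n), oNy n φ = (s : ℝ) • φ → oTry n φ = 0 →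
      C ((oGy n ^ k) φ) = ((s : ℝ) + ((n : ℝ) - 2) / 2) • (oGy n ^ k) φ)
    (hE2 : E * (oNy n + ((n : ℝ) / 2) • 1 + C - 1) = 1)
    (s k : ℕ) (φ : STF n)
    (hφ : oNy n φ = (s:ℝ) • φ) (hφ2 : oTry n φ = 0) :
    ∃ (w1 w2 : STF n) (e f : ℝ),
      (oDiv n - E * oGrad n * oTry n) ((oGy n ^ k) φ) = e • w2 ∧
      (oGrad n - oGy n * oDiv n * E) ((oGy n ^ k) φ) = f • w1 ∧
      oNy n w1 = ((s:ℝ) + 1 + 2*(k:ℝ)) • w1 ∧ C w1 = ((s:ℝ) + 1 + ((n:ℝ)-2)/2) • w1 ∧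
      oNy n w2 = ((s:ℝ) - 1 + 2*(k:ℝ)) • w2 ∧ C w2 = ((s:ℝ) - 1 + ((n:ℝ)-2)/2) • w2 := by
  classical
  have hnR : (3:ℝ) ≤ (n:ℝ) := by exact_mod_cast hn3
  have hsR : (0:ℝ) ≤ (s:ℝ) := Nat.cast_nonneg _
  have hkR : (0:ℝ) ≤ (k:ℝ) := Nat.cast_nonneg _
  have hb : (2*(s:ℝ) + (n:ℝ) - 2) ≠ 0 := by nlinarith
  have hα : (2*(s:ℝ) + 2*(k:ℝ) + (n:ℝ) - 2) ≠ 0 := by nlinarith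
  obtain ⟨ψ, hψdef⟩ : ∃ ψ : STF n, ψ = (2*(s:ℝ) + (n:ℝ) - 2)⁻¹ • oDiv n φ := ⟨_, rfl⟩
  obtain ⟨φ', hφ'def⟩ : ∃ φ' : STF n, φ' = oGrad n φ - oGy n ψ := ⟨_, rfl⟩
  -- basic facts
  have hD_e : oNy n (oDiv n φ) = ((s:ℝ) - 1) • oDiv n φ := by
    have h1 := oDiv_oNy φ
    rw [hφ, map_smul] at h1
    rw [eq_sub_of_add_eq h1.symm, sub_smul, one_smul]
  have hD_t : oTry n (oDiv n φ) = 0 := by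
    have h1 := oTry_oDiv φ
    rw [hφ2, map_zero] at h1; exact h1
  have hψ_e : oNy n ψ = ((s:ℝ) - 1) • ψ := by
    rw [hψdef, map_smul, hD_e, smul_comm]
  have hψ_t : oTry n ψ = 0 := by rw [hψdef, map_smul, hD_t, smul_zero]
  have hψ0 : s = 0 → ψ = 0 := by
    intro h0
    have hz : oDiv n φ = 0 := by
      refine eigen_neg hD_e ?_
      rw [h0]; norm_num
    rw [hψdef, hz, smul_zero]
  have hGradφ : oGrad n φ = φ' + oGy n ψ := by rw [hφ'def, sub_add_cancel]
  have hDψ : oDiv n φ = (2*(s:ℝ) + (n:ℝ) - 2) • ψ := by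
    rw [hψdef, smul_smul, mul_inv_cancel₀ hb, one_smul]
  have hφ'_t : oTry n φ' = 0 := by
    rw [hφ'def, map_sub, oTry_oGrad, hφ2, map_zero, zero_add, oTry_oGy, hψ_t, map_zero,
      zero_add, hψ_e, hDψ]
    match_scalars
    field_simp
    ring
  have hφ'_e : oNy n φ' = ((s:ℝ) + 1) • φ' := by
    rw [hφ'def, map_sub, oNy_oGrad, hφ, map_smul, oNy_oGy, hψ_e, map_smul, smul_sub]
    match_scalars <;> ring
  -- eigen facts for w1 w2
  have hNy_w1 : oNy n ((oGy n ^ k) φ') = ((s:ℝ) + 1 + 2*(k:ℝ)) • (oGy n ^ k) φ' := by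
    rw [oNy_pow_oGy hφ'_e k]
  have hNy_w2 : oNy n ((oGy n ^ k) ψ) = ((s:ℝ) - 1 + 2*(k:ℝ)) • (oGy n ^ k) ψ := by
    rw [oNy_pow_oGy hψ_e k]
  have hC_w1 : C ((oGy n ^ k) φ') = ((s:ℝ) + 1 + ((n:ℝ)-2)/2) • (oGy n ^ k) φ' := by
    have hcast : oNy n φ' = (((s+1:ℕ)):ℝ) • φ' := by rw [hφ'_e]; congr 1; push_cast; ring
    rw [hC (s+1) k φ' hcast hφ'_t]; congr 1; push_cast; ring
  have hC_w2 : C ((oGy n ^ k) ψ) = ((s:ℝ) - 1 + ((n:ℝ)-2)/2) • (oGy n ^ k) ψ := by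
    cases s with
    | zero => rw [hψ0 rfl]; simp
    | succ s' =>
      have hcast : oNy n ψ = ((s':ℕ):ℝ) • ψ := by rw [hψ_e]; congr 1; push_cast; ring
      rw [hC s' k ψ hcast hψ_t]; congr 1; push_cast; ring
  -- E facts
  have hE_v : E ((oGy n ^ k) φ)
      = (2*(s:ℝ) + 2*(k:ℝ) + (n:ℝ) - 2)⁻¹ • (oGy n ^ k) φ :=
    E_gen hC hE2 s k φ hφ hφ2 hα
  have hE_w2 : ∀ j : ℕ, E ((oGy n ^ j) ψ)
      = (2*((s:ℝ)-1) + 2*(j:ℝ) + (n:ℝ) - 2)⁻¹ • (oGy n ^ j) ψ := by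
    intro j
    cases s with
    | zero => rw [hψ0 rfl]; simp
    | succ s' =>
      have hcast : oNy n ψ = ((s':ℕ):ℝ) • ψ := by rw [hψ_e]; congr 1; push_cast; ring
      have hjR : (0:ℝ) ≤ (j:ℝ) := Nat.cast_nonneg _
      have hs'R : (0:ℝ) ≤ (s':ℝ) := Nat.cast_nonneg _
      have hne : (2*(s':ℝ) + 2*(j:ℝ) + (n:ℝ) - 2) ≠ 0 := by nlinarith
      rw [E_gen hC hE2 s' j ψ hcast hψ_t hne]
      congr 2
      push_cast
      ring
  have hE_w1 : ∀ j : ℕ, E ((oGy n ^ j) φ')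
      = (2*((s:ℝ)+1) + 2*(j:ℝ) + (n:ℝ) - 2)⁻¹ • (oGy n ^ j) φ' := by
    intro j
    have hcast : oNy n φ' = (((s+1:ℕ)):ℝ) • φ' := by rw [hφ'_e]; congr 1; push_cast; ring
    have hjR : (0:ℝ) ≤ (j:ℝ) := Nat.cast_nonneg _
    have hne : (2*((s+1:ℕ):ℝ) + 2*(j:ℝ) + (n:ℝ) - 2) ≠ 0 := by push_cast; nlinarith
    rw [E_gen hC hE2 (s+1) j φ' hcast hφ'_t hne]
    congr 2
    push_cast
    ring
  -- structural computations
  have hGrad_v : ∀ j : ℕ, oGrad n ((oGy n ^ j) φ) = (oGy n ^ j) φ' + (oGy n ^ (j+1)) ψ := by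
    intro j
    rw [oGrad_pow_oGy, hGradφ, map_add, ← pow_succ_apply j ψ]
  have hDiv_v : oDiv n ((oGy n ^ k) φ)
      = (2*(s:ℝ) + (n:ℝ) - 2) • (oGy n ^ k) ψ
        + (2*(k:ℝ)) • ((oGy n ^ (k-1)) (oGrad n φ)) := by
    rw [oDiv_pow_oGy, hDψ, map_smul]
  -- gradT computation
  have hgradT : (oGrad n - oGy n * oDiv n * E) ((oGy n ^ k) φ)
      = (1 - 2*(k:ℝ)*(2*(s:ℝ) + 2*(k:ℝ) + (n:ℝ) - 2)⁻¹) • (oGy n ^ k) φ' := by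
    have h2k : (2*(k:ℝ)) • (oGy n ((oGy n ^ (k-1)) (oGrad n φ)))
        = (2*(k:ℝ)) • ((oGy n ^ k) φ' + (oGy n ^ (k+1)) ψ) := by
      cases k with
      | zero => norm_num
      | succ K =>
        rw [show K+1-1 = K from rfl, ← pow_succ_apply' K (oGrad n φ), hGradφ, map_add,
          ← pow_succ_apply (K+1) ψ]
    rw [LinearMap.sub_apply, Module.End.mul_apply, Module.End.mul_apply, hE_v, map_smul, map_smul,
      hDiv_v, map_add, map_smul, map_smul, ← pow_succ_apply' k ψ, h2k, hGrad_v]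
    match_scalars
    · field_simp
    · rw [show (2 * (s:ℝ) + n - 2) * 1 + 2 * k * 1 = 2 * s + 2 * k + n - 2 by ring, inv_mul_cancel₀ hα, sub_self]
  -- divT computation
  have hdivT : ∃ e : ℝ, (oDiv n - E * oGrad n * oTry n) ((oGy n ^ k) φ) = e • (oGy n ^ k) ψ := by
    cases k with
    | zero =>
      refine ⟨2*(s:ℝ) + (n:ℝ) - 2, ?_⟩
      rw [LinearMap.sub_apply, Module.End.mul_apply, Module.End.mul_apply]
      simp only [pow_zero, Module.End.one_apply]
      rw [hφ2, map_zero, map_zero, sub_zero, hDψ]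
    | succ K =>
      refine ⟨(2*(s:ℝ) + (n:ℝ) - 2) + 2*((K:ℝ)+1)
        - 2*((K:ℝ)+1)*(2*(s:ℝ) + 2*((K:ℝ)+1) + (n:ℝ) - 2)
          * (2*((s:ℝ)-1) + 2*((K:ℝ)+1) + (n:ℝ) - 2)⁻¹, ?_⟩
      have htr : oTry n ((oGy n ^ (K+1)) φ)
          = (2*((K+1:ℕ):ℝ)*(2*(s:ℝ) + 2*((K+1:ℕ):ℝ) + (n:ℝ) - 2)) • (oGy n ^ K) φ := by
        rw [oTry_pow_oGy hφ hφ2 (K+1), show K + 1 - 1 = K from rfl]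
      rw [LinearMap.sub_apply, Module.End.mul_apply, Module.End.mul_apply, htr, map_smul, map_smul,
        hGrad_v K, map_add, hE_w1 K, hE_w2 (K+1), hDiv_v]
      rw [show K + 1 - 1 = K from rfl, hGradφ, map_add, ← pow_succ_apply K ψ]
      have hβcase : ψ = 0 ∨ (2*((s:ℝ)-1) + 2*((K:ℝ)+1) + (n:ℝ) - 2) ≠ 0 := by
        cases s with
        | zero => exact Or.inl (hψ0 rfl)
        | succ s' =>
          right
          have hs'R : (0:ℝ) ≤ (s':ℝ) := Nat.cast_nonneg _
          have hKR : (0:ℝ) ≤ (K:ℝ) := Nat.cast_nonneg _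
          push_cast
          nlinarith
      rcases hβcase with hz | hβ
      · rw [hz]
        simp only [map_zero, smul_zero, add_zero, zero_add, sub_zero, smul_zero]
        match_scalars
        have hne : ((K:ℝ)*2 + (s:ℝ)*2 + (n:ℝ)) ≠ 0 := by nlinarith
        linear_combination (-(2*(K:ℝ)+2)) * mul_inv_cancel₀ hne
      · match_scalars
        · field_simp
        · have hne : ((K:ℝ)*2 + (s:ℝ)*2 + (n:ℝ)) ≠ 0 := by nlinarith
          linear_combination (-(2*(K:ℝ)+2)) * mul_inv_cancel₀ hne
  obtain ⟨e, he⟩ := hdivT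
  exact ⟨(oGy n ^ k) φ', (oGy n ^ k) ψ, e,
    (1 - 2*(k:ℝ)*(2*(s:ℝ) + 2*(k:ℝ) + (n:ℝ) - 2)⁻¹), he, hgradT,
    hNy_w1, hC_w1, hNy_w2, hC_w2⟩

end Part5

/-- the modified operators `grad~ = grad − g∘div∘(𝒩+𝒞−1)⁻¹` and
`div~ = div − (𝒩+𝒞−1)⁻¹∘grad∘tr` commute with the depth operator: `𝒩∘div~ = div~∘(𝒩−1)`,
`𝒩∘grad~ = grad~∘(𝒩+1)`, `𝒞∘div~ = div~∘(𝒞−1)`, `𝒞∘grad~ = grad~∘(𝒞+1)`. -/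
theorem stmt14 (n : ℕ) (hn : 2 ≤ n)
    (C E : Module.End ℝ (STF n))
    (hC : ∀ (s k : ℕ) (φ : STF n), oNy n φ = (s : ℝ) • φ → oTry n φ = 0 →
      C ((oGy n ^ k) φ) = ((s : ℝ) + ((n : ℝ) - 2) / 2) • (oGy n ^ k) φ)
    (hE : (oNy n + ((n : ℝ) / 2) • 1 + C - 1) * E = 1 ∧
          E * (oNy n + ((n : ℝ) / 2) • 1 + C - 1) = 1) :
    let NN : Module.End ℝ (STF n) := oNy n + ((n : ℝ) / 2) • 1
    let gradT : Module.End ℝ (STF n) := oGrad n - oGy n * oDiv n * E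
    let divT : Module.End ℝ (STF n) := oDiv n - E * oGrad n * oTry n
    NN * divT = divT * (NN - 1) ∧
    NN * gradT = gradT * (NN + 1) ∧
    C * divT = divT * (C - 1) ∧
    C * gradT = gradT * (C + 1) := by
  intro NN gradT divT
  obtain ⟨hE1, hE2⟩ := hE
  have hn2 : n ≠ 2 := n_ne_two hC hE2
  have hn3 : 3 ≤ n := by omega
  have hspan := genAll_span_top (n := n) (by omega)
  refine ⟨?_, ?_, ?_, ?_⟩
  · show (oNy n + ((n:ℝ)/2) • 1) * (oDiv n - E * oGrad n * oTry n)
      = (oDiv n - E * oGrad n * oTry n) * ((oNy n + ((n:ℝ)/2) • 1) - 1)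
    apply LinearMap.ext_on hspan
    rintro v ⟨k, s, φ, hφ, hφ2, rfl⟩
    obtain ⟨w1, w2, e, f, hdiv, hgrad, hNw1, hCw1, hNw2, hCw2⟩ :=
      key_gen hn3 hC hE2 s k φ hφ hφ2
    rw [Module.End.mul_apply, Module.End.mul_apply, hdiv]
    have hL : (oNy n + ((n:ℝ)/2) • 1) (e • w2) = (e*((s:ℝ)-1+2*(k:ℝ)+(n:ℝ)/2)) • w2 := by
      rw [LinearMap.add_apply, LinearMap.smul_apply, Module.End.one_apply, map_smul, hNw2]
      match_scalars; ring
    have hR1 : ((oNy n + ((n:ℝ)/2) • 1) - 1) ((oGy n ^ k) φ)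
        = ((s:ℝ)+2*(k:ℝ)+(n:ℝ)/2-1) • (oGy n ^ k) φ := by
      rw [LinearMap.sub_apply, LinearMap.add_apply, LinearMap.smul_apply, Module.End.one_apply,
        oNy_pow_oGy hφ]
      match_scalars; ring
    rw [hL, hR1, map_smul, hdiv]
    match_scalars; ring
  · show (oNy n + ((n:ℝ)/2) • 1) * (oGrad n - oGy n * oDiv n * E)
      = (oGrad n - oGy n * oDiv n * E) * ((oNy n + ((n:ℝ)/2) • 1) + 1)
    apply LinearMap.ext_on hspan
    rintro v ⟨k, s, φ, hφ, hφ2, rfl⟩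
    obtain ⟨w1, w2, e, f, hdiv, hgrad, hNw1, hCw1, hNw2, hCw2⟩ :=
      key_gen hn3 hC hE2 s k φ hφ hφ2
    rw [Module.End.mul_apply, Module.End.mul_apply, hgrad]
    have hL : (oNy n + ((n:ℝ)/2) • 1) (f • w1) = (f*((s:ℝ)+1+2*(k:ℝ)+(n:ℝ)/2)) • w1 := by
      rw [LinearMap.add_apply, LinearMap.smul_apply, Module.End.one_apply, map_smul, hNw1]
      match_scalars; ring
    have hR1 : ((oNy n + ((n:ℝ)/2) • 1) + 1) ((oGy n ^ k) φ)
        = ((s:ℝ)+2*(k:ℝ)+(n:ℝ)/2+1) • (oGy n ^ k) φ := by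
      rw [LinearMap.add_apply, LinearMap.add_apply, LinearMap.smul_apply, Module.End.one_apply,
        oNy_pow_oGy hφ]
      match_scalars; ring
    rw [hL, hR1, map_smul, hgrad]
    match_scalars; ring
  · show C * (oDiv n - E * oGrad n * oTry n) = (oDiv n - E * oGrad n * oTry n) * (C - 1)
    apply LinearMap.ext_on hspan
    rintro v ⟨k, s, φ, hφ, hφ2, rfl⟩
    obtain ⟨w1, w2, e, f, hdiv, hgrad, hNw1, hCw1, hNw2, hCw2⟩ :=
      key_gen hn3 hC hE2 s k φ hφ hφ2
    rw [Module.End.mul_apply, Module.End.mul_apply, hdiv, map_smul, hCw2]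
    have hR1 : (C - 1) ((oGy n ^ k) φ) = ((s:ℝ)+((n:ℝ)-2)/2-1) • (oGy n ^ k) φ := by
      rw [LinearMap.sub_apply, Module.End.one_apply, hC s k φ hφ hφ2]
      match_scalars; ring
    rw [hR1, map_smul, hdiv]
    match_scalars; ring
  · show C * (oGrad n - oGy n * oDiv n * E) = (oGrad n - oGy n * oDiv n * E) * (C + 1)
    apply LinearMap.ext_on hspan
    rintro v ⟨k, s, φ, hφ, hφ2, rfl⟩
    obtain ⟨w1, w2, e, f, hdiv, hgrad, hNw1, hCw1, hNw2, hCw2⟩ :=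
      key_gen hn3 hC hE2 s k φ hφ hφ2
    rw [Module.End.mul_apply, Module.End.mul_apply, hgrad, map_smul, hCw1]
    have hR1 : (C + 1) ((oGy n ^ k) φ) = ((s:ℝ)+((n:ℝ)-2)/2+1) • (oGy n ^ k) φ := by
      rw [LinearMap.add_apply, Module.End.one_apply, hC s k φ hφ hφ2]
      match_scalars; ring
    rw [hR1, map_smul, hgrad]
    match_scalars; ring
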